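/- For every n ≥ 2, the sequence (v_n) satisfies the recursion v_{n+1} = v_n² − v_n + 1 + Π_{1≤i≤n−1} v_i. -/

import Mathlib

open Finset

/-- `v` is the sequence defined by `v 1 = 1`, `v 2 = 2`, and for `n ≥ 2`,
`v (n+1) = 1 + (Σ_{1≤i≤n} 1/v_i) / (1 - Σ_{1≤i<j≤n} 1/(v_i v_j))`.
These equations determine `v n` uniquely for all `n ≥ 1`. -/
def vSpec (v : ℕ → ℚ) : Prop :=
  v 1 = 1 ∧ v 2 = 2 ∧ ∀ n, 2 ≤ n →
    v (n + 1) = 1 + (∑ i ∈ Finset.Icc 1 n, 1 / v i) /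
      (1 - ∑ p ∈ (Finset.Icc 1 n ×ˢ Finset.Icc 1 n).filter (fun p => p.1 < p.2),
        1 / (v p.1 * v p.2))

lemma qstep (g : ℕ × ℕ → ℚ) (n : ℕ) :
    ∑ p ∈ (Finset.Icc 1 (n+1) ×ˢ Finset.Icc 1 (n+1)).filter (fun p => p.1 < p.2), g p
    = (∑ p ∈ (Finset.Icc 1 n ×ˢ Finset.Icc 1 n).filter (fun p => p.1 < p.2), g p)
      + ∑ i ∈ Finset.Icc 1 n, g (i, n+1) := by
  have hset : (Finset.Icc 1 (n+1) ×ˢ Finset.Icc 1 (n+1)).filter (fun p => p.1 < p.2)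
      = (Finset.Icc 1 n ×ˢ Finset.Icc 1 n).filter (fun p => p.1 < p.2)
        ∪ (Finset.Icc 1 n).image (fun i => (i, n+1)) := by
    ext ⟨a, b⟩
    simp only [Finset.mem_filter, Finset.mem_product, Finset.mem_Icc, Finset.mem_union,
      Finset.mem_image, Prod.mk.injEq]
    constructor
    · rintro ⟨⟨⟨h1, h2⟩, h3, h4⟩, h5⟩
      rcases Nat.lt_or_ge b (n+1) with hb | hb
      · left; exact ⟨⟨⟨h1, by omega⟩, h3, by omega⟩, h5⟩
      · right; exact ⟨a, by omega, rfl, by omega⟩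
    · rintro (⟨⟨⟨h1, h2⟩, h3, h4⟩, h5⟩ | ⟨i, hi, rfl, rfl⟩) <;>
        refine ⟨⟨⟨by omega, by omega⟩, by omega, by omega⟩, by omega⟩
  rw [hset, Finset.sum_union, Finset.sum_image]
  · intro x hx y hy h; exact (Prod.mk.injEq _ _ _ _ ▸ h).1
  · rw [Finset.disjoint_left]
    rintro ⟨a, b⟩ hab hab'
    simp only [Finset.mem_filter, Finset.mem_product, Finset.mem_Icc] at hab
    simp only [Finset.mem_image, Prod.mk.injEq] at hab'
    obtain ⟨i, hi, rfl, rfl⟩ := hab'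
    omega

lemma key (v : ℕ → ℚ) (hv : vSpec v) : ∀ n, 2 ≤ n →
    (∀ k, 1 ≤ k → k ≤ n → 0 < v k) ∧
    1 - (∑ p ∈ (Finset.Icc 1 n ×ˢ Finset.Icc 1 n).filter (fun p => p.1 < p.2),
        1 / (v p.1 * v p.2)) = 1 / ∏ i ∈ Finset.Icc 1 n, v i := by
  obtain ⟨h1, h2, hrec⟩ := hv
  intro n hn
  induction n, hn using Nat.le_induction with
  | base =>
    constructor
    · intro k hk1 hk2
      interval_cases k <;> simp [h1, h2]
    · have : (Finset.Icc 1 2 ×ˢ Finset.Icc 1 2).filter (fun p : ℕ × ℕ => p.1 < p.2)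
          = {(1, 2)} := by decide
      rw [this, show Finset.Icc 1 2 = {1, 2} from rfl]
      simp [h1, h2]
      norm_num
  | succ n hn ih =>
    obtain ⟨hpos, hq⟩ := ih
    set s := ∑ i ∈ Finset.Icc 1 n, 1 / v i with hs
    set P := ∏ i ∈ Finset.Icc 1 n, v i with hP
    have hPpos : 0 < P := Finset.prod_pos (fun i hi => by
      simp only [Finset.mem_Icc] at hi; exact hpos i hi.1 hi.2)
    have hspos : 0 < s := Finset.sum_pos (fun i hi => by
      simp only [Finset.mem_Icc] at hi
      exact div_pos one_pos (hpos i hi.1 hi.2))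
      ⟨1, by simp; omega⟩
    have hvn1 : v (n + 1) = 1 + s * P := by
      rw [hrec n hn, hq, one_div, div_inv_eq_mul]
    have hvpos : 0 < v (n + 1) := by
      rw [hvn1]; positivity
    refine ⟨fun k hk1 hk2 => ?_, ?_⟩
    · rcases Nat.lt_or_ge k (n + 1) with h | h
      · exact hpos k hk1 (by omega)
      · have : k = n + 1 := by omega
        rw [this]; exact hvpos
    · rw [qstep]
      have hsum : ∑ i ∈ Finset.Icc 1 n, 1 / (v i * v (n + 1))
          = s / v (n + 1) := by
        rw [hs, Finset.sum_div]
        refine Finset.sum_congr rfl fun i hi => ?_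
        rw [div_div]
      rw [Finset.prod_Icc_succ_top (by omega : 1 ≤ n + 1)]
      rw [← hP]
      rw [hsum]
      rw [show (1 : ℚ) - (∑ p ∈ (Finset.Icc 1 n ×ˢ Finset.Icc 1 n).filter
          (fun p => p.1 < p.2), 1 / (v p.1 * v p.2) + s / v (n + 1))
        = (1 - ∑ p ∈ (Finset.Icc 1 n ×ˢ Finset.Icc 1 n).filter
          (fun p => p.1 < p.2), 1 / (v p.1 * v p.2)) - s / v (n + 1) by ring, hq]
      rw [hvn1]
      have h1' : (1 : ℚ) + s * P ≠ 0 := by positivity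
      field_simp
      ring

lemma rec1 (v : ℕ → ℚ) (hv : vSpec v) (n : ℕ) (hn : 2 ≤ n) :
    v (n + 1) = 1 + (∑ i ∈ Finset.Icc 1 n, 1 / v i) * ∏ i ∈ Finset.Icc 1 n, v i := by
  obtain ⟨hpos, hq⟩ := key v hv n hn
  rw [hv.2.2 n hn, hq, one_div, div_inv_eq_mul]

/-- For `n ≥ 2`, `v_{n+1} = v_n² − v_n + 1 + Π_{1≤i≤n−1} v_i`. -/
theorem stmt5 (v : ℕ → ℚ) (hv : vSpec v) (n : ℕ) (hn : 2 ≤ n) :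
    v (n + 1) = v n ^ 2 - v n + 1 + ∏ i ∈ Finset.Icc 1 (n - 1), v i := by
  rcases eq_or_lt_of_le hn with h | h
  · -- n = 2
    subst h
    have h3 : v 3 = 1 + (∑ i ∈ Finset.Icc 1 2, 1 / v i) * ∏ i ∈ Finset.Icc 1 2, v i :=
      rec1 v hv 2 (by norm_num)
    rw [show Finset.Icc 1 2 = {1, 2} by rfl] at h3
    simp [hv.1, hv.2.1] at h3
    norm_num [h3, hv.1, hv.2.1, show Finset.Icc 1 1 = {1} by rfl]
  · -- n ≥ 3
    obtain ⟨m, rfl⟩ : ∃ m, n = m + 1 := ⟨n - 1, by omega⟩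
    have hm : 2 ≤ m := by omega
    have hA := rec1 v hv (m + 1) (by omega)
    have hB := rec1 v hv m hm
    obtain ⟨hpos, -⟩ := key v hv (m + 1) (by omega)
    have hvne : v (m + 1) ≠ 0 := ne_of_gt (hpos (m + 1) (by omega) le_rfl)
    rw [Finset.sum_Icc_succ_top (by omega : 1 ≤ m + 1),
        Finset.prod_Icc_succ_top (by omega : 1 ≤ m + 1)] at hA
    have hsP : (∑ i ∈ Finset.Icc 1 m, 1 / v i) * ∏ i ∈ Finset.Icc 1 m, v i
        = v (m + 1) - 1 := by rw [hB]; ring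
    rw [hA]
    have : m + 1 - 1 = m := by omega
    rw [this]
    field_simp
    linear_combination v (m + 1) * hsP
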